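/- For each n ≥ 1, Σ_{k=1}^{n} S(n,k) · n!/(n-k+1)! = (n+1)^{n-1}, where S(n,k) is the Stirling number of the second kind. (The Shi arrangement Shi(n) has (n+1)^{n-1} regions, counted by ceiling partitions.) -/

import Mathlib

open Finset Nat

/-- The Stirling number of the second kind: the number of set partitions of an
n-element set into k nonempty blocks. -/
noncomputable def stirling (n k : ℕ) : ℕ :=
  Nat.card {P : Finpartition (univ : Finset (Fin n)) // P.parts.card = k}

-- extensionality via part
lemma finpart_ext {α : Type*} [DecidableEq α] [Fintype α]
    (P Q : Finpartition (univ : Finset α)) (h : ∀ x, P.part x = Q.part x) : P = Q := by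
  ext p
  constructor
  · intro hp
    obtain ⟨x, hx⟩ := P.nonempty_of_mem_parts hp
    rw [← P.part_eq_of_mem hp hx, h]
    exact Q.part_mem.2 (mem_univ x)
  · intro hp
    obtain ⟨x, hx⟩ := Q.nonempty_of_mem_parts hp
    rw [← Q.part_eq_of_mem hp hx, ← h]
    exact P.part_mem.2 (mem_univ x)

noncomputable def keyEquiv (n m : ℕ) :
    (Σ P : Finpartition (univ : Finset (Fin n)), (↥P.parts ↪ Fin m)) ≃ (Fin n → Fin m) := by
  apply Equiv.ofBijective (fun z x => z.2 ⟨z.1.part x, z.1.part_mem.2 (mem_univ x)⟩)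
  constructor
  · rintro ⟨P, g⟩ ⟨Q, h⟩ heq
    simp only [funext_iff] at heq
    have hpart : ∀ x, P.part x = Q.part x := by
      intro x
      ext y
      rw [P.mem_part_iff_part_eq_part (mem_univ y) (mem_univ x),
        Q.mem_part_iff_part_eq_part (mem_univ y) (mem_univ x)]
      constructor
      · intro hy
        have := heq y
        rw [show (⟨P.part y, P.part_mem.2 (mem_univ y)⟩ : ↥P.parts) = ⟨P.part x, P.part_mem.2 (mem_univ x)⟩ from Subtype.ext hy] at this
        have := h.injective (heq x ▸ this)
        exact (congrArg Subtype.val this).symm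
      · intro hy
        have := (heq y).symm
        rw [show (⟨Q.part y, Q.part_mem.2 (mem_univ y)⟩ : ↥Q.parts) = ⟨Q.part x, Q.part_mem.2 (mem_univ x)⟩ from Subtype.ext hy] at this
        have := g.injective ((heq x).symm ▸ this)
        exact (congrArg Subtype.val this).symm
    obtain rfl : P = Q := finpart_ext P Q hpart
    congr 1
    apply Function.Embedding.ext
    rintro ⟨p, hp⟩
    obtain ⟨x, hx⟩ := P.nonempty_of_mem_parts hp
    have e : P.part x = p := P.part_eq_of_mem hp hx
    have h1 := heq x
    simpa [show (⟨P.part x, P.part_mem.2 (mem_univ x)⟩ : ↥P.parts) = ⟨p, hp⟩ from Subtype.ext e] using h1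
  · intro f
    classical
    let s : Setoid (Fin n) := Setoid.ker f
    haveI : DecidableRel s.r := fun a b => decEq (f a) (f b)
    let P := Finpartition.ofSetoid s
    have hmem : ∀ (a b : Fin n), b ∈ P.part a ↔ f a = f b := fun a b =>
      Finpartition.mem_part_ofSetoid_iff_rel
    have hne : ∀ p : ↥P.parts, p.1.Nonempty := fun p => P.nonempty_of_mem_parts p.2
    let g0 : ↥P.parts → Fin m := fun p => f (p.1.min' (hne p))
    have hg0 : ∀ (p : ↥P.parts) (a : Fin n), a ∈ p.1 → f a = g0 p := by
      rintro ⟨p, hp⟩ a ha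
      have hpne : p.Nonempty := P.nonempty_of_mem_parts hp
      have hmin : p.min' hpne ∈ p := Finset.min'_mem p hpne
      have hpa : P.part a = p := P.part_eq_of_mem hp ha
      exact (hmem a _).1 (hpa ▸ hmin)
    have hginj : Function.Injective g0 := by
      rintro ⟨p, hp⟩ ⟨q, hq⟩ hpq
      have hpne : p.Nonempty := P.nonempty_of_mem_parts hp
      have hqne : q.Nonempty := P.nonempty_of_mem_parts hq
      have hmp : p.min' hpne ∈ p := Finset.min'_mem p hpne
      have hmq : q.min' hqne ∈ q := Finset.min'_mem q hqne
      have : q.min' _ ∈ P.part (p.min' _) := (hmem _ _).2 hpq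
      rw [P.part_eq_of_mem hp hmp] at this
      exact Subtype.ext (P.eq_of_mem_parts hp hq this hmq)
    refine ⟨⟨P, ⟨g0, hginj⟩⟩, ?_⟩
    funext x
    exact (hg0 ⟨P.part x, P.part_mem.2 (mem_univ x)⟩ x (P.mem_part (mem_univ x))).symm

lemma key_count (n m : ℕ) :
    m ^ n = ∑ P : Finpartition (univ : Finset (Fin n)), m.descFactorial P.parts.card := by
  classical
  have h1 : Fintype.card (Fin n → Fin m) = m ^ n := by simp
  have h2 := Fintype.card_congr (keyEquiv n m).symm
  rw [h1, Fintype.card_sigma] at h2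
  rw [h2]
  refine Finset.sum_congr rfl fun P _ => ?_
  rw [Fintype.card_embedding_eq, Fintype.card_fin, Fintype.card_coe]

lemma key2 (n m : ℕ) :
    m ^ n = ∑ k ∈ range (n + 1), stirling n k * m.descFactorial k := by
  classical
  rw [key_count n m]
  rw [← Finset.sum_fiberwise_of_maps_to (g := fun P : Finpartition (univ : Finset (Fin n)) =>
    P.parts.card) (t := range (n + 1)) (fun P _ => by
      simp only [mem_range, Nat.lt_succ_iff]
      simpa using P.card_parts_le_card)]
  refine Finset.sum_congr rfl fun k _ => ?_
  have hc : ∀ P ∈ univ.filter (fun P : Finpartition (univ : Finset (Fin n)) => P.parts.card = k),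
      m.descFactorial P.parts.card = m.descFactorial k := fun P hP => by
    rw [(Finset.mem_filter.1 hP).2]
  rw [Finset.sum_congr rfl hc, Finset.sum_const, smul_eq_mul]
  congr 1
  rw [stirling, Nat.card_eq_fintype_card, Fintype.card_subtype]

/-- Σ_{k=1}^n S(n,k)·n!/(n-k+1)! = (n+1)^{n-1}
(the Shi arrangement Shi(n) has (n+1)^{n-1} regions, counted by ceiling partitions). -/
theorem stmt14 (n : ℕ) (hn : 1 ≤ n) :
    ∑ k ∈ Icc 1 n, stirling n k * (n ! / (n - k + 1)!) = (n + 1) ^ (n - 1) := by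
  classical
  have h0 : stirling n 0 = 0 := by
    rw [stirling]
    have he : IsEmpty {P : Finpartition (univ : Finset (Fin n)) // P.parts.card = 0} := by
      refine ⟨fun ⟨P, hP⟩ => ?_⟩
      rw [Finset.card_eq_zero, Finpartition.parts_eq_empty_iff] at hP
      have h2 : (⟨0, hn⟩ : Fin n) ∈ (univ : Finset (Fin n)) := mem_univ _
      rw [hP] at h2
      simp at h2
    exact Nat.card_of_isEmpty
  have hm := key2 n (n + 1)
  have hins : range (n + 1) = insert 0 (Icc 1 n) := by
    ext k; simp [Nat.lt_succ_iff]; omega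
  rw [hins, Finset.sum_insert (by simp), h0, zero_mul, zero_add] at hm
  have hterm : ∀ k ∈ Icc 1 n, stirling n k * (n + 1).descFactorial k
      = (n + 1) * (stirling n k * (n ! / (n - k + 1)!)) := by
    intro k hk
    rw [mem_Icc] at hk
    obtain ⟨j, rfl⟩ : ∃ j, k = j + 1 := ⟨k - 1, by omega⟩
    rw [Nat.succ_descFactorial_succ, Nat.descFactorial_eq_div (by omega : j ≤ n),
      show n - j = n - (j + 1) + 1 by omega]
    ring
  rw [Finset.sum_congr rfl hterm, ← Finset.mul_sum] at hm
  have hpow : (n + 1) ^ n = (n + 1) * (n + 1) ^ (n - 1) := by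
    rw [show (n + 1) ^ n = (n + 1) ^ (n - 1 + 1) by rw [Nat.sub_add_cancel hn],
      pow_succ, mul_comm]
  rw [hpow] at hm
  exact (Nat.eq_of_mul_eq_mul_left (Nat.succ_pos n) hm).symm
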